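/- Let δ > 0 and let (G_n)_{n≥0} be an independent sequence of real random variables on a probability space, each distributed according to the Gaussian measure on ℝ with mean 0 and variance δ, and let Y_0 be a real random variable independent of (G_n)_{n≥0}. Define Y_{n+1} = Y_n − δ·(Y_n³ + Y_n) + √2·G_n for all n ≥ 0, with second moments E[Y_n²] taken in [0,∞]. If E[Y_0²] ≥ 4 + 4/δ², then E[Y_n²] → ∞ as n → ∞. -/

import Mathlib

open MeasureTheory ProbabilityTheory Filter Real
open scoped ENNReal NNReal


lemma aux_ptwise' (δ x g c : ℝ) (hδ : 0 < δ) (hc : c^2 = 2*g^2) :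
    δ^2/8 * x^6 ≤ ((1-δ)*x - δ*x^3 + c)^2 + 2*g^2 + (1+δ)^3/δ := by
  have h1 : ((1-δ)*x - δ*x^3)^2/2 - 2*g^2 ≤ ((1-δ)*x - δ*x^3 + c)^2 := by
    nlinarith [sq_nonneg ((1-δ)*x - δ*x^3 + 2*c), hc]
  have h2' : δ^2*x^6/2 - (1-δ)^2*x^2 ≤ ((1-δ)*x - δ*x^3)^2 := by
    nlinarith [sq_nonneg (δ*x^3 - 2*(1-δ)*x)]
  have h3 : (1-δ)^2*x^2/2 ≤ δ^2*x^6/8 + (1+δ)^3/δ := by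
    rw [← mul_le_mul_iff_right₀ hδ]
    have hfs : δ * (δ^2*x^6/8 + (1+δ)^3/δ) = δ^3*x^6/8 + (1+δ)^3 := by
      field_simp
    rw [hfs]
    rcases le_or_gt (δ*x^2) (2*(1+δ)) with h | h
    · nlinarith [mul_le_mul_of_nonneg_left h (sq_nonneg (1-δ)),
        mul_nonneg hδ.le (by positivity : (0:ℝ) ≤ 1+δ),
        (by positivity : (0:ℝ) ≤ δ^3*x^6)]
    · nlinarith [mul_lt_mul_of_pos_left h (lt_of_le_of_lt (by positivity) h : (0:ℝ) < δ*x^2),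
        sq_nonneg (1-δ), sq_nonneg (1+δ),
        mul_nonneg (mul_nonneg hδ.le (sq_nonneg x)) (sq_nonneg (1-δ)),
        mul_nonneg hδ.le (sq_nonneg x)]
  linarith

lemma aux_mainineq (δ r : ℝ) (hδ : 0 < δ) (hr : 4 + 4/δ^2 ≤ r) :
    2*r + (6*δ + (1+δ)^3/δ) ≤ δ^2/8 * r^3 := by
  have hδ2 : (0:ℝ) < δ^2 := by positivity
  have hd4 : (0:ℝ) ≤ 4/δ^2 := by positivity
  have hr4 : (4:ℝ) ≤ r := by linarith
  have hr0 : (0:ℝ) < r := by linarith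
  have h1 : 4*δ^2 + 4 ≤ δ^2 * r := by
    have h := mul_le_mul_of_nonneg_left hr hδ2.le
    have e : δ^2 * (4 + 4/δ^2) = 4*δ^2 + 4 := by field_simp
    rw [e] at h; exact h
  have h2 : (4*δ^2+4)^2 ≤ (δ^2*r)^2 := by nlinarith [h1, mul_pos hδ2 hr0]
  have h3 : (4*δ^2+4)^2 * r ≤ (δ^2*r)^2 * r := mul_le_mul_of_nonneg_right h2 hr0.le
  have Q : 16*δ^2*r + 48*δ^3 + 8*δ*(1+δ)^3 ≤ δ^4*r^3 := by
    nlinarith [h3, hr4, mul_le_mul_of_nonneg_left hr4 (by positivity : (0:ℝ) ≤ 16*δ^4),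
      mul_le_mul_of_nonneg_left hr4 (by positivity : (0:ℝ) ≤ 16*δ^2),
      mul_le_mul_of_nonneg_left hr4 (by norm_num : (0:ℝ) ≤ 16),
      sq_nonneg (2 - 2*δ), sq_nonneg (6*δ - 6*δ^2), hδ.le, sq_nonneg δ]
  rw [← mul_le_mul_iff_right₀ (by positivity : (0:ℝ) < 8*δ^2)]
  have e1 : 8*δ^2*(2*r + (6*δ + (1+δ)^3/δ)) = 16*δ^2*r + 48*δ^3 + 8*δ*(1+δ)^3 := by
    field_simp; ring
  have e2 : 8*δ^2*(δ^2/8*r^3) = δ^4*r^3 := by ring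
  rw [e1, e2]; exact Q

lemma aux_u_le_exp (u : ℝ) (hu : 0 ≤ u) : u ≤ Real.exp (u/2) := by
  have h := Real.add_one_le_exp (u/4)
  have h2 : Real.exp (u/2) = Real.exp (u/4) ^ 2 := by
    rw [← Real.exp_nat_mul]; norm_num; ring_nf
  nlinarith [sq_nonneg (1 - u/4), Real.exp_pos (u/4)]

lemma aux_gaussian_pt (v : ℝ≥0) (hv : 0 < (v:ℝ)) (x : ℝ) :
    2 * x ^ 2 * gaussianPDFReal 0 v x ≤ 6 * v * gaussianPDFReal 0 (2 * v) x := by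
  have hpi : (0:ℝ) < π := Real.pi_pos
  rw [gaussianPDFReal, gaussianPDFReal]
  simp only [sub_zero]
  push_cast
  have hA : 2 * x ^ 2 * Real.exp (-x ^ 2 / (2 * v)) ≤
      4 * v * Real.exp (-x ^ 2 / (2 * (2 * (v:ℝ)))) := by
    set u : ℝ := x ^ 2 / (2 * v) with hu
    have hu0 : 0 ≤ u := by positivity
    have h1 : 2 * x ^ 2 = 4 * (v:ℝ) * u := by rw [hu]; field_simp; ring
    have h2 : -x ^ 2 / (2 * (v:ℝ)) = -u := by rw [hu, neg_div]
    have h3 : -x ^ 2 / (2 * (2 * (v:ℝ))) = -(u/2) := by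
      rw [hu, neg_div]; rw [div_div]; congr 2; ring
    rw [h1, h2, h3]
    have hexp : u * Real.exp (-u) ≤ Real.exp (-(u/2)) := by
      calc u * Real.exp (-u) ≤ Real.exp (u/2) * Real.exp (-u) :=
            mul_le_mul_of_nonneg_right (aux_u_le_exp u hu0) (Real.exp_pos _).le
        _ = Real.exp (-(u/2)) := by rw [← Real.exp_add]; ring_nf
    calc 4 * (v:ℝ) * u * Real.exp (-u) = 4 * (v:ℝ) * (u * Real.exp (-u)) := by ring
      _ ≤ 4 * (v:ℝ) * Real.exp (-(u/2)) := by
          exact mul_le_mul_of_nonneg_left hexp (by positivity)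
  have ha : (0:ℝ) < √(2 * π * (2 * (v:ℝ))) := Real.sqrt_pos.mpr (by positivity)
  have hb : (0:ℝ) < √(2 * π * (v:ℝ)) := Real.sqrt_pos.mpr (by positivity)
  have hs : √(2 * π * (2 * (v:ℝ))) ≤ (3/2) * √(2 * π * (v:ℝ)) := by
    have h94 : (2 * π * (2 * (v:ℝ))) ≤ (3/2)^2 * (2 * π * (v:ℝ)) := by nlinarith
    calc √(2 * π * (2 * (v:ℝ))) ≤ √((3/2)^2 * (2 * π * (v:ℝ))) := Real.sqrt_le_sqrt h94
      _ = (3/2) * √(2 * π * (v:ℝ)) := by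
          rw [Real.sqrt_mul (by positivity), Real.sqrt_sq (by norm_num)]
  have hB : (√(2 * π * (v:ℝ)))⁻¹ ≤ (3/2) * (√(2 * π * (2 * (v:ℝ))))⁻¹ := by
    have h23 : (2/3) * √(2 * π * (2 * (v:ℝ))) ≤ √(2 * π * (v:ℝ)) := by linarith
    have hinv := inv_anti₀ (by positivity : (0:ℝ) < (2/3) * √(2 * π * (2 * (v:ℝ)))) h23
    rw [mul_inv] at hinv
    calc (√(2 * π * (v:ℝ)))⁻¹ ≤ (2/3 : ℝ)⁻¹ * (√(2 * π * (2 * (v:ℝ))))⁻¹ := hinv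
      _ = (3/2) * (√(2 * π * (2 * (v:ℝ))))⁻¹ := by norm_num
  calc 2 * x ^ 2 * ((√(2 * π * (v:ℝ)))⁻¹ * Real.exp (-x ^ 2 / (2 * (v:ℝ))))
      = (√(2 * π * (v:ℝ)))⁻¹ * (2 * x ^ 2 * Real.exp (-x ^ 2 / (2 * (v:ℝ)))) := by ring
    _ ≤ ((3/2) * (√(2 * π * (2 * (v:ℝ))))⁻¹) *
        (4 * v * Real.exp (-x ^ 2 / (2 * (2 * (v:ℝ))))) := by
        apply mul_le_mul hB hA (by positivity) (by positivity)
    _ = 6 * v * ((√(2 * π * (2 * (v:ℝ))))⁻¹ * Real.exp (-x ^ 2 / (2 * (2 * (v:ℝ))))) := by ring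

lemma aux_gauss_moment (v : ℝ≥0) (hv : v ≠ 0) :
    ∫⁻ x, ENNReal.ofReal (2 * x ^ 2) ∂(gaussianReal 0 v) ≤ ENNReal.ofReal (6 * v) := by
  have hv0 : 0 < (v:ℝ) := by positivity
  have h2v : (2 * v : ℝ≥0) ≠ 0 := by positivity
  rw [gaussianReal_of_var_ne_zero _ hv,
    lintegral_withDensity_eq_lintegral_mul _ (measurable_gaussianPDF _ _)
      (by exact (measurable_const.mul (measurable_id.pow_const 2)).ennreal_ofReal)]
  have hpt : ∀ x : ℝ, (gaussianPDF 0 v * fun x => ENNReal.ofReal (2 * x ^ 2)) x ≤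
      ENNReal.ofReal (6 * v) * gaussianPDF 0 (2 * v) x := by
    intro x
    simp only [Pi.mul_apply, gaussianPDF]
    rw [← ENNReal.ofReal_mul (gaussianPDFReal_nonneg _ _ _),
      ← ENNReal.ofReal_mul (by positivity)]
    apply ENNReal.ofReal_le_ofReal
    calc gaussianPDFReal 0 v x * (2 * x ^ 2) = 2 * x ^ 2 * gaussianPDFReal 0 v x := by ring
      _ ≤ 6 * v * gaussianPDFReal 0 (2 * v) x := aux_gaussian_pt v hv0 x
  calc ∫⁻ x, (gaussianPDF 0 v * fun x => ENNReal.ofReal (2 * x ^ 2)) x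
      ≤ ∫⁻ x, ENNReal.ofReal (6 * v) * gaussianPDF 0 (2 * v) x := lintegral_mono hpt
    _ = ENNReal.ofReal (6 * v) * ∫⁻ x, gaussianPDF 0 (2 * v) x :=
        lintegral_const_mul' _ _ ENNReal.ofReal_ne_top
    _ = ENNReal.ofReal (6 * v) := by rw [lintegral_gaussianPDF_eq_one 0 h2v, mul_one]


-- Jensen-type: cube of lintegral on a probability measure
lemma aux_cube_lintegral_le {Ω : Type*} [MeasurableSpace Ω] (P : Measure Ω)
    [IsProbabilityMeasure P] (W : Ω → ℝ≥0∞) :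
    (∫⁻ ω, W ω ∂P) ^ 3 ≤ ∫⁻ ω, (W ω) ^ 3 ∂P := by
  obtain ⟨g, hgm, hgle, hgeq⟩ := exists_measurable_le_lintegral_eq P W
  have hmeas : (∫⁻ ω, g ω ∂P) ^ 3 ≤ ∫⁻ ω, (g ω) ^ 3 ∂P := by
    have hpq : (3:ℝ).HolderConjugate (3/2) := Real.holderConjugate_iff.mpr ⟨by norm_num, by norm_num⟩
    have h := ENNReal.lintegral_mul_le_Lp_mul_Lq P hpq (f := g)
      (g := fun _ => (1:ℝ≥0∞)) hgm.aemeasurable aemeasurable_const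
    simp only [Pi.mul_apply, mul_one, ENNReal.one_rpow, lintegral_one,
      measure_univ] at h
    have h' : ∫⁻ ω, g ω ∂P ≤ (∫⁻ ω, g ω ^ (3:ℝ) ∂P) ^ (1/3 : ℝ) := by
      simpa using h
    have h3 : (∫⁻ ω, g ω ∂P) ^ (3:ℝ) ≤ ((∫⁻ ω, g ω ^ (3:ℝ) ∂P) ^ (1/3 : ℝ)) ^ (3:ℝ) :=
      ENNReal.rpow_le_rpow h' (by norm_num)
    rw [← ENNReal.rpow_natCast ((∫⁻ ω, g ω ∂P)) 3]
    rw [← ENNReal.rpow_mul, one_div, inv_mul_cancel₀ (by norm_num : (3:ℝ) ≠ 0),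
      ENNReal.rpow_one] at h3
    calc (∫⁻ ω, g ω ∂P) ^ ((3:ℕ):ℝ) ≤ ∫⁻ ω, g ω ^ (3:ℝ) ∂P := by
          exact_mod_cast h3
      _ = ∫⁻ ω, (g ω) ^ 3 ∂P := by
          congr 1; funext ω; rw [← ENNReal.rpow_natCast (g ω) 3]; norm_num
  calc (∫⁻ ω, W ω ∂P) ^ 3 = (∫⁻ ω, g ω ∂P) ^ 3 := by rw [hgeq]
    _ ≤ ∫⁻ ω, (g ω) ^ 3 ∂P := hmeas
    _ ≤ ∫⁻ ω, (W ω) ^ 3 ∂P :=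
        lintegral_mono fun ω => pow_le_pow_left₀ (zero_le) (hgle ω) 3

/-- Example 6.6 (moment blow-up): for the Euler scheme
`Y_{n+1} = Y_n − δ(Y_n³ + Y_n) + √2·G_n` with i.i.d. `N(0,δ)` increments
independent of the initial condition, if `E[Y_0²] ≥ 4 + 4/δ²`, then
`E[Y_n²] → ∞`. -/
theorem stmt_17 {Ω : Type*} [MeasurableSpace Ω] (P : Measure Ω)
    [IsProbabilityMeasure P] (δ : ℝ) (hδ : 0 < δ)
    (Y : ℕ → Ω → ℝ) (G : ℕ → Ω → ℝ)
    (hindep : iIndepFun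
      (fun n : ℕ => Nat.rec (motive := fun _ => Ω → ℝ) (Y 0) (fun k _ => G k) n) P)
    (hG : ∀ n : ℕ, Measure.map (G n) P = gaussianReal 0 δ.toNNReal)
    (hY : ∀ (n : ℕ) (ω : Ω),
      Y (n + 1) ω = Y n ω - δ * ((Y n ω) ^ 3 + Y n ω) + Real.sqrt 2 * G n ω)
    (hY0 : ENNReal.ofReal (4 + 4 / δ ^ 2) ≤
      ∫⁻ ω, ENNReal.ofReal ((Y 0 ω) ^ 2) ∂P) :
    Tendsto (fun n : ℕ => ∫⁻ ω, ENNReal.ofReal ((Y n ω) ^ 2) ∂P) atTop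
      (nhds ⊤) := by
  set m : ℕ → ℝ≥0∞ := fun n => ∫⁻ ω, ENNReal.ofReal ((Y n ω) ^ 2) ∂P with hm
  -- the G n are a.e. measurable
  have hGmeas : ∀ n, AEMeasurable (G n) P := by
    intro n
    by_contra h
    have h0 := Measure.map_of_not_aemeasurable h
    rw [hG n] at h0
    exact (IsProbabilityMeasure.ne_zero (gaussianReal 0 δ.toNNReal)) h0
  have hδnn : δ.toNNReal ≠ 0 := by
    simp only [ne_eq, Real.toNNReal_eq_zero, not_le]; exact hδ
  have hδcoe : ((δ.toNNReal : ℝ≥0) : ℝ) = δ := Real.coe_toNNReal δ hδ.le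
  -- second moment of the Gaussian increments
  have hGsq : ∀ n, ∫⁻ ω, ENNReal.ofReal (2 * (G n ω) ^ 2) ∂P ≤ ENNReal.ofReal (6 * δ) := by
    intro n
    have hmble : Measurable (fun x : ℝ => ENNReal.ofReal (2 * x ^ 2)) :=
      (measurable_const.mul (measurable_id.pow_const 2)).ennreal_ofReal
    have hmap : ∫⁻ ω, ENNReal.ofReal (2 * (G n ω) ^ 2) ∂P
        = ∫⁻ x, ENNReal.ofReal (2 * x ^ 2) ∂(Measure.map (G n) P) :=
      (lintegral_map' hmble.aemeasurable (hGmeas n)).symm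
    rw [hmap, hG n]
    have := aux_gauss_moment δ.toNNReal hδnn
    rwa [hδcoe] at this
  -- constants
  set K : ℝ := (1+δ)^3 / δ with hK
  have hK0 : 0 ≤ K := by positivity
  set C : ℝ := 6*δ + K with hC
  have hC0 : 0 ≤ C := by positivity
  -- the key one-step inequality
  have key : ∀ n, ENNReal.ofReal (δ^2/8) * (m n)^3 ≤ m (n+1) + ENNReal.ofReal C := by
    intro n
    have hpt : ∀ ω, ENNReal.ofReal (δ^2/8 * (Y n ω)^6)
        ≤ ENNReal.ofReal ((Y (n+1) ω)^2)
          + (ENNReal.ofReal (2 * (G n ω)^2) + ENNReal.ofReal K) := by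
      intro ω
      have hc : (Real.sqrt 2 * G n ω)^2 = 2 * (G n ω)^2 := by
        rw [mul_pow, Real.sq_sqrt (by norm_num : (0:ℝ) ≤ 2)]
      have hr : δ^2/8 * (Y n ω)^6 ≤ (Y (n+1) ω)^2 + (2 * (G n ω)^2 + K) := by
        have := aux_ptwise' δ (Y n ω) (G n ω) (Real.sqrt 2 * G n ω) hδ hc
        have hrw : (1-δ) * Y n ω - δ * (Y n ω)^3 + Real.sqrt 2 * G n ω = Y (n+1) ω := by
          rw [hY n ω]; ring
        rw [hrw] at this
        rw [hK]; linarith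
      calc ENNReal.ofReal (δ^2/8 * (Y n ω)^6)
          ≤ ENNReal.ofReal ((Y (n+1) ω)^2 + (2 * (G n ω)^2 + K)) :=
            ENNReal.ofReal_le_ofReal hr
        _ = ENNReal.ofReal ((Y (n+1) ω)^2)
            + (ENNReal.ofReal (2 * (G n ω)^2) + ENNReal.ofReal K) := by
            rw [ENNReal.ofReal_add (sq_nonneg _) (by positivity),
              ENNReal.ofReal_add (by positivity) hK0]
    have hD : AEMeasurable (fun ω => ENNReal.ofReal (2 * (G n ω)^2) + ENNReal.ofReal K) P := by
      exact (ENNReal.measurable_ofReal.comp_aemeasurable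
        (((hGmeas n).pow_const 2).const_mul 2)).add aemeasurable_const
    have hsplit : ∫⁻ ω, (ENNReal.ofReal ((Y (n+1) ω)^2)
          + (ENNReal.ofReal (2 * (G n ω)^2) + ENNReal.ofReal K)) ∂P
        = m (n+1) + (∫⁻ ω, ENNReal.ofReal (2 * (G n ω)^2) ∂P + ENNReal.ofReal K) := by
      rw [lintegral_add_right' _ hD, lintegral_add_right' _ aemeasurable_const,
        lintegral_const, measure_univ, mul_one]
    have hLHS : ∫⁻ ω, ENNReal.ofReal (δ^2/8 * (Y n ω)^6) ∂P
        = ENNReal.ofReal (δ^2/8) * ∫⁻ ω, (ENNReal.ofReal ((Y n ω)^2))^3 ∂P := by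
      have : ∀ ω, ENNReal.ofReal (δ^2/8 * (Y n ω)^6)
          = ENNReal.ofReal (δ^2/8) * (ENNReal.ofReal ((Y n ω)^2))^3 := by
        intro ω
        rw [← ENNReal.ofReal_pow (sq_nonneg _), ← ENNReal.ofReal_mul (by positivity)]
        congr 1; ring
      simp_rw [this]
      exact lintegral_const_mul' _ _ ENNReal.ofReal_ne_top
    calc ENNReal.ofReal (δ^2/8) * (m n)^3
        ≤ ENNReal.ofReal (δ^2/8) * ∫⁻ ω, (ENNReal.ofReal ((Y n ω)^2))^3 ∂P := by
          exact mul_le_mul_right (aux_cube_lintegral_le P _) _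
      _ = ∫⁻ ω, ENNReal.ofReal (δ^2/8 * (Y n ω)^6) ∂P := hLHS.symm
      _ ≤ ∫⁻ ω, (ENNReal.ofReal ((Y (n+1) ω)^2)
            + (ENNReal.ofReal (2 * (G n ω)^2) + ENNReal.ofReal K)) ∂P :=
          lintegral_mono hpt
      _ = m (n+1) + (∫⁻ ω, ENNReal.ofReal (2 * (G n ω)^2) ∂P + ENNReal.ofReal K) := hsplit
      _ ≤ m (n+1) + (ENNReal.ofReal (6*δ) + ENNReal.ofReal K) := by
          exact add_le_add_right (add_le_add_left (hGsq n) _) _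
      _ = m (n+1) + ENNReal.ofReal C := by
          rw [hC, ENNReal.ofReal_add (by positivity) hK0]
  -- one step doubling
  have step : ∀ n, ENNReal.ofReal (4 + 4/δ^2) ≤ m n → 2 * m n ≤ m (n+1) := by
    intro n hmn
    by_cases htop : m n = ⊤
    · have h1 : ENNReal.ofReal (δ^2/8) * (m n)^3 = ⊤ := by
        rw [htop, ENNReal.top_pow (by norm_num), ENNReal.mul_top]
        simp only [ne_eq, ENNReal.ofReal_eq_zero, not_le]
        positivity
      have h2 : m (n+1) + ENNReal.ofReal C = ⊤ := by
        have := key n; rw [h1] at this; exact top_le_iff.mp this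
      have h3 : m (n+1) = ⊤ := by
        rcases ENNReal.add_eq_top.mp h2 with h | h
        · exact h
        · exact absurd h ENNReal.ofReal_ne_top
      rw [htop, h3]; exact le_top
    · set r : ℝ := (m n).toReal with hrdef
      have hmr : m n = ENNReal.ofReal r := (ENNReal.ofReal_toReal htop).symm
      have hr4 : 4 + 4/δ^2 ≤ r := by
        rw [hmr] at hmn
        exact (ENNReal.ofReal_le_ofReal_iff ENNReal.toReal_nonneg).mp hmn
      have hreal : 2*r + C ≤ δ^2/8 * r^3 := by
        have := aux_mainineq δ r hδ hr4
        rw [hC, hK]; linarith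
      have hks : ENNReal.ofReal (δ^2/8 * r^3) ≤ m (n+1) + ENNReal.ofReal C := by
        have := key n
        rwa [hmr, ← ENNReal.ofReal_pow ENNReal.toReal_nonneg,
          ← ENNReal.ofReal_mul (by positivity)] at this
      have h2r : ENNReal.ofReal (2*r) + ENNReal.ofReal C ≤ m (n+1) + ENNReal.ofReal C := by
        calc ENNReal.ofReal (2*r) + ENNReal.ofReal C
            = ENNReal.ofReal (2*r + C) := (ENNReal.ofReal_add (by positivity) hC0).symm
          _ ≤ ENNReal.ofReal (δ^2/8 * r^3) := ENNReal.ofReal_le_ofReal hreal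
          _ ≤ m (n+1) + ENNReal.ofReal C := hks
      have := (ENNReal.add_le_add_iff_right ENNReal.ofReal_ne_top).mp h2r
      calc 2 * m n = ENNReal.ofReal (2*r) := by
            rw [hmr, ENNReal.ofReal_mul (by norm_num), ENNReal.ofReal_ofNat]
        _ ≤ m (n+1) := this
  -- geometric growth
  have hT4 : (4:ℝ≥0∞) ≤ ENNReal.ofReal (4 + 4/δ^2) := by
    rw [show (4:ℝ≥0∞) = ENNReal.ofReal 4 by rw [ENNReal.ofReal_ofNat]]
    refine ENNReal.ofReal_le_ofReal ?_
    have : (0:ℝ) ≤ 4/δ^2 := by positivity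
    linarith
  have growth : ∀ n, 2^n * ENNReal.ofReal (4 + 4/δ^2) ≤ m n := by
    intro n
    induction n with
    | zero => simpa using hY0
    | succ n ih =>
      have hTn : ENNReal.ofReal (4 + 4/δ^2) ≤ m n := by
        refine le_trans ?_ ih
        conv_lhs => rw [← one_mul (ENNReal.ofReal (4 + 4/δ^2))]
        exact mul_le_mul_left (one_le_pow_of_one_le' (by norm_num : (1:ℝ≥0∞) ≤ 2) n) _
      calc (2:ℝ≥0∞)^(n+1) * ENNReal.ofReal (4 + 4/δ^2)
          = 2 * (2^n * ENNReal.ofReal (4 + 4/δ^2)) := by ring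
        _ ≤ 2 * m n := mul_le_mul_right ih _
        _ ≤ m (n+1) := step n hTn
  -- conclude
  apply ENNReal.tendsto_nhds_top
  intro k
  filter_upwards [eventually_ge_atTop k] with n hn
  have h1 : ((k:ℝ≥0∞)) < 2^n * 4 := by
    have hk : (k:ℕ) < 2^n * 4 := by
      calc k < 2^k := Nat.lt_two_pow_self
        _ ≤ 2^n := Nat.pow_le_pow_right (by norm_num) hn
        _ ≤ 2^n * 4 := Nat.le_mul_of_pos_right _ (by norm_num)
    exact_mod_cast hk
  calc ((k:ℝ≥0∞)) < 2^n * 4 := h1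
    _ ≤ 2^n * ENNReal.ofReal (4 + 4/δ^2) := mul_le_mul_right hT4 _
    _ ≤ m n := growth n
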